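/- arXiv:0812.1378 — 3 statements merged into one kernel-verified Lean document; each statement's English description precedes it below -/
import Mathlib

section
/- Let S be a self-adjoint operator on a 3-dimensional real inner product space with eigenvalues λ₁ < λ₂ < λ₃ and corresponding orthonormal eigenvectors η₁, η₂, η₃. Define ω± = √((λ₂−λ₁)/(λ₃−λ₁)) η₁ ± √((λ₃−λ₂)/(λ₃−λ₁)) η₃. Then ω± are unit vectors, and for every v in the orthogonal complement of ω₊ (and likewise of ω₋) one has ⟨Sv, v⟩ = λ₂ |v|². -/
open scoped RealInnerProductSpace

/-- For a self-adjoint operator `S` with eigenvalues `λ₁ < λ₂ < λ₃` and orthonormal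
eigenvectors `η₁, η₂, η₃`, the vectors `ω± = √((λ₂−λ₁)/(λ₃−λ₁)) η₁ ± √((λ₃−λ₂)/(λ₃−λ₁)) η₃`
are unit vectors, and the quadratic form of `S` restricted to `ω±⊥` is `λ₂ |·|²`. -/
theorem stmt_8
    (V : Type*) [NormedAddCommGroup V] [InnerProductSpace ℝ V]
    [FiniteDimensional ℝ V] (hdim : Module.finrank ℝ V = 3)
    (S : V →ₗ[ℝ] V) (hsym : LinearMap.IsSymmetric S)
    (l₁ l₂ l₃ : ℝ) (hl : l₁ < l₂ ∧ l₂ < l₃)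
    (η₁ η₂ η₃ : V)
    (he₁ : S η₁ = l₁ • η₁) (he₂ : S η₂ = l₂ • η₂) (he₃ : S η₃ = l₃ • η₃)
    (hn₁ : ‖η₁‖ = 1) (hn₂ : ‖η₂‖ = 1) (hn₃ : ‖η₃‖ = 1)
    (ho₁₂ : ⟪η₁, η₂⟫ = 0) (ho₁₃ : ⟪η₁, η₃⟫ = 0) (ho₂₃ : ⟪η₂, η₃⟫ = 0)
    (ωp ωm : V)
    (hωp : ωp = Real.sqrt ((l₂ - l₁) / (l₃ - l₁)) • η₁ +
      Real.sqrt ((l₃ - l₂) / (l₃ - l₁)) • η₃)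
    (hωm : ωm = Real.sqrt ((l₂ - l₁) / (l₃ - l₁)) • η₁ -
      Real.sqrt ((l₃ - l₂) / (l₃ - l₁)) • η₃) :
    ‖ωp‖ = 1 ∧ ‖ωm‖ = 1 ∧
      (∀ v : V, ⟪ωp, v⟫ = 0 → ⟪S v, v⟫ = l₂ * ‖v‖ ^ 2) ∧
      (∀ v : V, ⟪ωm, v⟫ = 0 → ⟪S v, v⟫ = l₂ * ‖v‖ ^ 2) := by
  obtain ⟨h12, h23⟩ := hl
  have h13 : l₁ < l₃ := h12.trans h23
  have hd : (0:ℝ) < l₃ - l₁ := by linarith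
  obtain ⟨p, hp_def⟩ : ∃ p : ℝ, (l₂ - l₁) / (l₃ - l₁) = p := ⟨_, rfl⟩
  obtain ⟨q, hq_def⟩ : ∃ q : ℝ, (l₃ - l₂) / (l₃ - l₁) = q := ⟨_, rfl⟩
  rw [hp_def, hq_def] at hωp hωm
  have hp : 0 ≤ p := hp_def ▸ div_nonneg (by linarith) (by linarith)
  have hq : 0 ≤ q := hq_def ▸ div_nonneg (by linarith) (by linarith)
  have hpq : p + q = 1 := by
    rw [← hp_def, ← hq_def, ← add_div]
    have : l₂ - l₁ + (l₃ - l₂) = l₃ - l₁ := by ring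
    rw [this, div_self hd.ne']
  have hsp : Real.sqrt p ^ 2 = p := Real.sq_sqrt hp
  have hsq : Real.sqrt q ^ 2 = q := Real.sq_sqrt hq
  have hi₁ : ⟪η₁, η₁⟫ = 1 := by
    rw [real_inner_self_eq_norm_sq, hn₁]; norm_num
  have hi₂ : ⟪η₂, η₂⟫ = 1 := by
    rw [real_inner_self_eq_norm_sq, hn₂]; norm_num
  have hi₃ : ⟪η₃, η₃⟫ = 1 := by
    rw [real_inner_self_eq_norm_sq, hn₃]; norm_num
  have ho₂₁ : ⟪η₂, η₁⟫ = 0 := by rw [real_inner_comm]; exact ho₁₂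
  have ho₃₁ : ⟪η₃, η₁⟫ = 0 := by rw [real_inner_comm]; exact ho₁₃
  have ho₃₂ : ⟪η₃, η₂⟫ = 0 := by rw [real_inner_comm]; exact ho₂₃
  -- orthonormal family
  have horth : Orthonormal ℝ (![η₁, η₂, η₃] : Fin 3 → V) := by
    rw [orthonormal_iff_ite]
    intro i j
    fin_cases i <;> fin_cases j <;>
      simp_all [hi₁, hi₂, hi₃, ho₁₂, ho₁₃, ho₂₃, ho₂₁, ho₃₁, ho₃₂]
  have key : ∀ v : V, v = ⟪η₁, v⟫ • η₁ + ⟪η₂, v⟫ • η₂ + ⟪η₃, v⟫ • η₃ := by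
    have hcard : Fintype.card (Fin 3) = Module.finrank ℝ V := by simp [hdim]
    have hspan : Submodule.span ℝ (Set.range (![η₁, η₂, η₃] : Fin 3 → V)) = ⊤ := by
      rw [← coe_basisOfOrthonormalOfCardEqFinrank horth hcard]
      exact (basisOfOrthonormalOfCardEqFinrank horth hcard).span_eq
    let b : OrthonormalBasis (Fin 3) ℝ V := OrthonormalBasis.mk horth hspan.ge
    have hb0 : b 0 = η₁ := by simp [b, OrthonormalBasis.coe_mk]
    have hb1 : b 1 = η₂ := by simp [b, OrthonormalBasis.coe_mk]
    have hb2 : b 2 = η₃ := by simp [b, OrthonormalBasis.coe_mk]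
    intro v
    have h := b.sum_repr' v
    rw [Fin.sum_univ_three, hb0, hb1, hb2] at h
    exact h.symm
  -- the quadratic form identity, given the orthogonality constraint in coordinates
  have main : ∀ v : V,
      Real.sqrt p * ⟪η₁, v⟫ + Real.sqrt q * ⟪η₃, v⟫ = 0 ∨
      Real.sqrt p * ⟪η₁, v⟫ - Real.sqrt q * ⟪η₃, v⟫ = 0 →
      ⟪S v, v⟫ = l₂ * ‖v‖ ^ 2 := by
    intro v hv
    obtain ⟨a, ha⟩ : ∃ a, ⟪η₁, v⟫ = a := ⟨_, rfl⟩
    obtain ⟨e, he⟩ : ∃ e, ⟪η₂, v⟫ = e := ⟨_, rfl⟩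
    obtain ⟨c, hc⟩ : ∃ c, ⟪η₃, v⟫ = c := ⟨_, rfl⟩
    rw [ha, hc] at hv
    have hveq := key v
    rw [ha, he, hc] at hveq
    have hSv : S v = (a * l₁) • η₁ + (e * l₂) • η₂ + (c * l₃) • η₃ := by
      rw [hveq]
      simp [he₁, he₂, he₃, smul_smul, mul_comm]
    have h1 : ⟪S v, v⟫ = l₁ * a ^ 2 + l₂ * e ^ 2 + l₃ * c ^ 2 := by
      conv_lhs => rw [hSv, hveq]
      simp only [inner_add_left, inner_add_right, real_inner_smul_left,
        real_inner_smul_right, hi₁, hi₂, hi₃, ho₁₂, ho₁₃, ho₂₃, ho₂₁, ho₃₁, ho₃₂]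
      ring
    have h2 : ‖v‖ ^ 2 = a ^ 2 + e ^ 2 + c ^ 2 := by
      rw [← real_inner_self_eq_norm_sq]
      conv_lhs => rw [hveq]
      simp only [inner_add_left, inner_add_right, real_inner_smul_left,
        real_inner_smul_right, hi₁, hi₂, hi₃, ho₁₂, ho₁₃, ho₂₃, ho₂₁, ho₃₁, ho₃₂]
      ring
    have hsqeq : (Real.sqrt p * a) ^ 2 = (Real.sqrt q * c) ^ 2 := by
      rcases hv with hv | hv
      · have h' : Real.sqrt p * a = -(Real.sqrt q * c) := by linarith
        rw [h']; ring
      · have h' : Real.sqrt p * a = Real.sqrt q * c := by linarith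
        rw [h']
    have hsq' : p * a ^ 2 = q * c ^ 2 := by
      calc p * a ^ 2 = (Real.sqrt p * a) ^ 2 := by rw [mul_pow, hsp]
        _ = (Real.sqrt q * c) ^ 2 := hsqeq
        _ = q * c ^ 2 := by rw [mul_pow, hsq]
    have hkey : (l₂ - l₁) * a ^ 2 = (l₃ - l₂) * c ^ 2 := by
      have hp' : p * (l₃ - l₁) = l₂ - l₁ := by
        rw [← hp_def]; field_simp
      have hq' : q * (l₃ - l₁) = l₃ - l₂ := by
        rw [← hq_def]; field_simp
      linear_combination c ^ 2 * hq' - a ^ 2 * hp' + (l₃ - l₁) * hsq'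
    rw [h1, h2]; linear_combination (-1 : ℝ) * hkey
  refine ⟨?_, ?_, ?_, ?_⟩
  · have : ‖ωp‖ ^ 2 = 1 := by
      rw [← real_inner_self_eq_norm_sq, hωp]
      simp only [inner_add_left, inner_add_right, real_inner_smul_left, real_inner_smul_right,
        hi₁, hi₃, ho₁₃, ho₃₁, mul_one, mul_zero, add_zero, zero_add]
      linear_combination hsp + hsq + hpq
    calc ‖ωp‖ = Real.sqrt (‖ωp‖ ^ 2) := (Real.sqrt_sq (norm_nonneg _)).symm
      _ = 1 := by rw [this, Real.sqrt_one]
  · have : ‖ωm‖ ^ 2 = 1 := by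
      rw [← real_inner_self_eq_norm_sq, hωm]
      simp only [inner_sub_left, inner_sub_right, real_inner_smul_left, real_inner_smul_right,
        hi₁, hi₃, ho₁₃, ho₃₁, mul_one, mul_zero, add_zero, zero_add, sub_zero, zero_sub]
      linear_combination hsp + hsq + hpq
    calc ‖ωm‖ = Real.sqrt (‖ωm‖ ^ 2) := (Real.sqrt_sq (norm_nonneg _)).symm
      _ = 1 := by rw [this, Real.sqrt_one]
  · intro v hv
    apply main v
    left
    rw [hωp] at hv
    simpa [inner_add_left, real_inner_smul_left] using hv
  · intro v hv
    apply main v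
    right
    rw [hωm] at hv
    simpa [inner_sub_left, real_inner_smul_left, sub_eq_zero] using hv
end

section
/- Let S be a self-adjoint positive definite operator on a 3-dimensional real inner product space with eigenvalues λ₁ < λ₂ < λ₃. Then, up to sign, there are exactly two unit vectors ω such that the quadratic form v ↦ ⟨Sv, v⟩ restricted to the plane ω⊥ equals λ₂ |v|²; namely ω = ω₊ or ω = ω₋, where ω± = √((λ₂−λ₁)/(λ₃−λ₁)) η₁ ± √((λ₃−λ₂)/(λ₃−λ₁)) η₃ and η₁, η₃ are unit eigenvectors for λ₁, λ₃. -/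
open scoped RealInnerProductSpace

set_option maxHeartbeats 1000000 in
/-- Up to sign, the only unit vectors `ω` such that the quadratic form of `S`
restricted to `ω⊥` equals `λ₂ |·|²` are `ω₊` and `ω₋`. -/
theorem stmt_9
    (V : Type*) [NormedAddCommGroup V] [InnerProductSpace ℝ V]
    [FiniteDimensional ℝ V] (hdim : Module.finrank ℝ V = 3)
    (S : V →ₗ[ℝ] V) (hsym : LinearMap.IsSymmetric S)
    (hpos : ∀ v : V, v ≠ 0 → 0 < ⟪S v, v⟫)
    (l₁ l₂ l₃ : ℝ) (hl : l₁ < l₂ ∧ l₂ < l₃)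
    (η₁ η₂ η₃ : V)
    (he₁ : S η₁ = l₁ • η₁) (he₂ : S η₂ = l₂ • η₂) (he₃ : S η₃ = l₃ • η₃)
    (hn₁ : ‖η₁‖ = 1) (hn₂ : ‖η₂‖ = 1) (hn₃ : ‖η₃‖ = 1)
    (ωp ωm : V)
    (hωp : ωp = Real.sqrt ((l₂ - l₁) / (l₃ - l₁)) • η₁ +
      Real.sqrt ((l₃ - l₂) / (l₃ - l₁)) • η₃)
    (hωm : ωm = Real.sqrt ((l₂ - l₁) / (l₃ - l₁)) • η₁ -
      Real.sqrt ((l₃ - l₂) / (l₃ - l₁)) • η₃)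
    (ω : V) (hω : ‖ω‖ = 1)
    (hconf : ∀ v : V, ⟪ω, v⟫ = 0 → ⟪S v, v⟫ = l₂ * ‖v‖ ^ 2) :
    ω = ωp ∨ ω = -ωp ∨ ω = ωm ∨ ω = -ωm := by
  obtain ⟨h12', h23'⟩ := hl
  have h13' : l₁ < l₃ := h12'.trans h23'
  -- orthogonality of eigenvectors
  have key : ∀ (x y : V) (lx ly : ℝ), S x = lx • x → S y = ly • y → lx ≠ ly →
      ⟪x, y⟫ = 0 := by
    intro x y lx ly hx hy hne
    have h := hsym x y
    rw [hx, hy, real_inner_smul_left, real_inner_smul_right] at h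
    have : (lx - ly) * ⟪x, y⟫ = 0 := by ring_nf; linarith
    rcases mul_eq_zero.1 this with h' | h'
    · exact absurd (by linarith : lx = ly) hne
    · exact h'
  have h12 : ⟪η₁, η₂⟫ = 0 := key _ _ _ _ he₁ he₂ h12'.ne
  have h13 : ⟪η₁, η₃⟫ = 0 := key _ _ _ _ he₁ he₃ h13'.ne
  have h23 : ⟪η₂, η₃⟫ = 0 := key _ _ _ _ he₂ he₃ h23'.ne
  have h21 : ⟪η₂, η₁⟫ = 0 := by rw [real_inner_comm]; exact h12
  have h31 : ⟪η₃, η₁⟫ = 0 := by rw [real_inner_comm]; exact h13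
  have h32 : ⟪η₃, η₂⟫ = 0 := by rw [real_inner_comm]; exact h23
  have h11 : ⟪η₁, η₁⟫ = 1 := by rw [real_inner_self_eq_norm_sq, hn₁]; norm_num
  have h22 : ⟪η₂, η₂⟫ = 1 := by rw [real_inner_self_eq_norm_sq, hn₂]; norm_num
  have h33 : ⟪η₃, η₃⟫ = 1 := by rw [real_inner_self_eq_norm_sq, hn₃]; norm_num
  -- the eigenvectors span
  have hon : Orthonormal ℝ ![η₁, η₂, η₃] := by
    rw [orthonormal_iff_ite]
    intro i j
    fin_cases i <;> fin_cases j <;>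
      simp [h11, h22, h33, h12, h13, h23, h21, h31, h32, hn₁, hn₂, hn₃]
  have hsp : Submodule.span ℝ (Set.range ![η₁, η₂, η₃]) = ⊤ :=
    hon.linearIndependent.span_eq_top_of_card_eq_finrank (by simp [hdim])
  have hmem : ω ∈ Submodule.span ℝ (Set.range ![η₁, η₂, η₃]) := by
    rw [hsp]; trivial
  rw [Submodule.mem_span_range_iff_exists_fun] at hmem
  obtain ⟨f, hf⟩ := hmem
  rw [Fin.sum_univ_three] at hf
  simp only [Matrix.cons_val_zero, Matrix.cons_val_one, Matrix.head_cons,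
    Matrix.cons_val_two, Matrix.tail_cons] at hf
  set a := f 0 with ha'
  set b := f 1 with hb'
  set c := f 2 with hc'
  -- b = 0
  have hb : b = 0 := by
    have horth : ⟪ω, b • η₁ - a • η₂⟫ = 0 := by
      rw [← hf]
      simp [inner_add_left, inner_sub_right, real_inner_smul_left,
        real_inner_smul_right, h11, h22, h33, h12, h13, h23, h21, h31, h32, hn₁, hn₂, hn₃]
      ring
    have hu := hconf _ horth
    rw [← real_inner_self_eq_norm_sq] at hu
    have hS : S (b • η₁ - a • η₂) = (b * l₁) • η₁ - (a * l₂) • η₂ := by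
      rw [map_sub, map_smul, map_smul, he₁, he₂, smul_smul, smul_smul]
    rw [hS] at hu
    simp only [inner_sub_left, inner_sub_right, real_inner_smul_left,
      real_inner_smul_right, h11, h22, h12, h21] at hu
    have hb2 : b ^ 2 = 0 := by nlinarith [sq_nonneg b]
    exact pow_eq_zero_iff (by norm_num) |>.1 hb2
  -- norm condition
  have hnorm : a ^ 2 + c ^ 2 = 1 := by
    have : ⟪ω, ω⟫ = 1 := by rw [real_inner_self_eq_norm_sq, hω]; norm_num
    rw [← hf, hb] at this
    simp only [zero_smul, add_zero, inner_add_left, inner_add_right,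
      real_inner_smul_left, real_inner_smul_right,
      h11, h22, h33, h12, h13, h23, h21, h31, h32] at this
    nlinarith [this]
  -- the main equation
  have hmain : l₁ * c ^ 2 + l₃ * a ^ 2 = l₂ := by
    have horth : ⟪ω, c • η₁ - a • η₃⟫ = 0 := by
      rw [← hf, hb]
      simp [inner_add_left, inner_sub_right, real_inner_smul_left,
        real_inner_smul_right, h11, h22, h33, h12, h13, h23, h21, h31, h32, hn₁, hn₂, hn₃]
      ring
    have hu := hconf _ horth
    rw [← real_inner_self_eq_norm_sq] at hu
    have hS : S (c • η₁ - a • η₃) = (c * l₁) • η₁ - (a * l₃) • η₃ := by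
      rw [map_sub, map_smul, map_smul, he₁, he₃, smul_smul, smul_smul]
    rw [hS] at hu
    simp only [inner_sub_left, inner_sub_right, real_inner_smul_left,
      real_inner_smul_right, h11, h33, h13, h31] at hu
    linear_combination hu + l₂ * hnorm
  have h31pos : 0 < l₃ - l₁ := by linarith
  have ha2 : a ^ 2 = (l₂ - l₁) / (l₃ - l₁) := by
    field_simp
    linear_combination hmain - l₁ * hnorm
  have hc2 : c ^ 2 = (l₃ - l₂) / (l₃ - l₁) := by
    field_simp
    linear_combination l₃ * hnorm - hmain
  set sA := Real.sqrt ((l₂ - l₁) / (l₃ - l₁)) with hsA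
  set sC := Real.sqrt ((l₃ - l₂) / (l₃ - l₁)) with hsC
  have hsA2 : sA ^ 2 = (l₂ - l₁) / (l₃ - l₁) :=
    Real.sq_sqrt (div_nonneg (by linarith) (by linarith))
  have hsC2 : sC ^ 2 = (l₃ - l₂) / (l₃ - l₁) :=
    Real.sq_sqrt (div_nonneg (by linarith) (by linarith))
  have haA : a = sA ∨ a = -sA := by
    have : (a - sA) * (a + sA) = 0 := by linear_combination ha2 - hsA2
    rcases mul_eq_zero.1 this with h | h
    · left; linarith
    · right; linarith
  have hcC : c = sC ∨ c = -sC := by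
    have : (c - sC) * (c + sC) = 0 := by linear_combination hc2 - hsC2
    rcases mul_eq_zero.1 this with h | h
    · left; linarith
    · right; linarith
  have hωeq : ω = a • η₁ + c • η₃ := by
    rw [← hf, hb]; simp
  rcases haA with ha | ha <;> rcases hcC with hc | hc
  · left; rw [hωeq, ha, hc, hωp]
  · right; right; left; rw [hωeq, ha, hc, hωm, sub_eq_add_neg, neg_smul]
  · right; right; right
    rw [hωeq, ha, hc, hωm]
    module
  · right; left
    rw [hωeq, ha, hc, hωp]
    module
end

section
/- Let S be a self-adjoint operator on ℝ³ with eigenvalues λ₁ < λ₂ < λ₃ and orthonormal eigenvectors η₁, η₂, η₃, and let ω = √((λ₂−λ₁)/(λ₃−λ₁)) η₁ + √((λ₃−λ₂)/(λ₃−λ₁)) η₃. Define B(ω) = [S, C(ω)] = S∘C(ω) − C(ω)∘S, where C(ω)v = ω × v (cross product computed in the oriented orthonormal basis η₁, η₂, η₃). Then B(ω) = μ (ω ⊙ η₂) with μ = √(λ₃−λ₂)·√(λ₂−λ₁), where (ω ⊙ η₂)α = ⟨ω, α⟩η₂ + ⟨η₂, α⟩ω. -/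
open scoped RealInnerProductSpace

/-- The cross product on `ℝ³`. -/
noncomputable def cross3 (a b : EuclideanSpace ℝ (Fin 3)) : EuclideanSpace ℝ (Fin 3) :=
  WithLp.toLp 2 ![a 1 * b 2 - a 2 * b 1, a 2 * b 0 - a 0 * b 2, a 0 * b 1 - a 1 * b 0]

lemma cross3_add_right (a b b' : EuclideanSpace ℝ (Fin 3)) :
    cross3 a (b + b') = cross3 a b + cross3 a b' := by
  ext i; fin_cases i <;> simp [cross3] <;> ring

lemma cross3_smul_right (c : ℝ) (a b : EuclideanSpace ℝ (Fin 3)) :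
    cross3 a (c • b) = c • cross3 a b := by
  ext i; fin_cases i <;> simp [cross3] <;> ring

lemma cross3_add_left (a a' b : EuclideanSpace ℝ (Fin 3)) :
    cross3 (a + a') b = cross3 a b + cross3 a' b := by
  ext i; fin_cases i <;> simp [cross3] <;> ring

lemma cross3_smul_left (c : ℝ) (a b : EuclideanSpace ℝ (Fin 3)) :
    cross3 (c • a) b = c • cross3 a b := by
  ext i; fin_cases i <;> simp [cross3] <;> ring

lemma cross3_self (a : EuclideanSpace ℝ (Fin 3)) : cross3 a a = 0 := by
  ext i; fin_cases i <;> simp [cross3] <;> ring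

lemma cross3_anticomm (a b : EuclideanSpace ℝ (Fin 3)) : cross3 a b = - cross3 b a := by
  ext i; fin_cases i <;> simp [cross3] <;> ring

lemma cross3_key1 (a b : EuclideanSpace ℝ (Fin 3)) (h2 : ⟪b, b⟫ = 1) (h3 : ⟪a, b⟫ = 0) :
    cross3 b (cross3 a b) = a := by
  simp only [PiLp.inner_apply, RCLike.inner_apply, conj_trivial, Fin.sum_univ_three] at h2 h3
  ext i; fin_cases i <;> simp [cross3]
  · linear_combination a 0 * h2 - b 0 * h3
  · linear_combination a 1 * h2 - b 1 * h3
  · linear_combination a 2 * h2 - b 2 * h3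

lemma cross3_key2 (a b : EuclideanSpace ℝ (Fin 3)) (h1 : ⟪a, a⟫ = 1) (h3 : ⟪a, b⟫ = 0) :
    cross3 (cross3 a b) a = b := by
  simp only [PiLp.inner_apply, RCLike.inner_apply, conj_trivial, Fin.sum_univ_three] at h1 h3
  ext i; fin_cases i <;> simp [cross3]
  · linear_combination b 0 * h1 - a 0 * h3
  · linear_combination b 1 * h1 - a 1 * h3
  · linear_combination b 2 * h1 - a 2 * h3

/-- With `ω = √((λ₂−λ₁)/(λ₃−λ₁)) η₁ + √((λ₃−λ₂)/(λ₃−λ₁)) η₃`, the commutator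
`B(ω) = [S, C(ω)]` equals `μ (ω ⊙ η₂)` with `μ = √(λ₃−λ₂)·√(λ₂−λ₁)`. -/
theorem stmt_11
    (S : EuclideanSpace ℝ (Fin 3) →ₗ[ℝ] EuclideanSpace ℝ (Fin 3))
    (hsym : LinearMap.IsSymmetric S)
    (l₁ l₂ l₃ : ℝ) (hl : l₁ < l₂ ∧ l₂ < l₃)
    (η₁ η₂ η₃ : EuclideanSpace ℝ (Fin 3))
    (he₁ : S η₁ = l₁ • η₁) (he₂ : S η₂ = l₂ • η₂) (he₃ : S η₃ = l₃ • η₃)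
    (hn₁ : ‖η₁‖ = 1) (hn₂ : ‖η₂‖ = 1) (hn₃ : ‖η₃‖ = 1)
    (ho₁₂ : ⟪η₁, η₂⟫ = 0) (ho₁₃ : ⟪η₁, η₃⟫ = 0) (ho₂₃ : ⟪η₂, η₃⟫ = 0)
    (horient : cross3 η₁ η₂ = η₃)
    (ω : EuclideanSpace ℝ (Fin 3))
    (hω : ω = Real.sqrt ((l₂ - l₁) / (l₃ - l₁)) • η₁ +
      Real.sqrt ((l₃ - l₂) / (l₃ - l₁)) • η₃) :
    ∀ α : EuclideanSpace ℝ (Fin 3),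
      S (cross3 ω α) - cross3 ω (S α) =
        (Real.sqrt (l₃ - l₂) * Real.sqrt (l₂ - l₁)) •
          (⟪ω, α⟫ • η₂ + ⟪η₂, α⟫ • ω) := by
  intro α
  obtain ⟨hl12, hl23⟩ := hl
  have hp : (0:ℝ) < l₂ - l₁ := by linarith
  have hq : (0:ℝ) < l₃ - l₂ := by linarith
  have hr : (0:ℝ) < l₃ - l₁ := by linarith
  have h11 : ⟪η₁, η₁⟫ = 1 := by rw [real_inner_self_eq_norm_sq, hn₁]; norm_num
  have h22 : ⟪η₂, η₂⟫ = 1 := by rw [real_inner_self_eq_norm_sq, hn₂]; norm_num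
  have h33 : ⟪η₃, η₃⟫ = 1 := by rw [real_inner_self_eq_norm_sq, hn₃]; norm_num
  have ho₂₁ : ⟪η₂, η₁⟫ = 0 := by rw [real_inner_comm]; exact ho₁₂
  have ho₃₁ : ⟪η₃, η₁⟫ = 0 := by rw [real_inner_comm]; exact ho₁₃
  have ho₃₂ : ⟪η₃, η₂⟫ = 0 := by rw [real_inner_comm]; exact ho₂₃
  -- cross product table
  have c12 : cross3 η₁ η₂ = η₃ := horient
  have c23 : cross3 η₂ η₃ = η₁ := by
    rw [← c12]; exact cross3_key1 η₁ η₂ h22 ho₁₂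
  have c31 : cross3 η₃ η₁ = η₂ := by
    rw [← c12]; exact cross3_key2 η₁ η₂ h11 ho₁₂
  have c21 : cross3 η₂ η₁ = -η₃ := by rw [cross3_anticomm, c12]
  have c32 : cross3 η₃ η₂ = -η₁ := by rw [cross3_anticomm, c23]
  have c13 : cross3 η₁ η₃ = -η₂ := by rw [cross3_anticomm, c31]
  -- basis expansion of α
  have hrepr : ∃ x₁ x₂ x₃ : ℝ, α = x₁ • η₁ + x₂ • η₂ + x₃ • η₃ := by
    set v : Fin 3 → EuclideanSpace ℝ (Fin 3) := ![η₁, η₂, η₃] with hv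
    have ho : Orthonormal ℝ v := by
      rw [orthonormal_iff_ite]
      intro i j
      fin_cases i <;> fin_cases j <;> simp [hv, hn₁, hn₂, hn₃, ho₁₂, ho₁₃, ho₂₃, ho₂₁, ho₃₁, ho₃₂]
    have hcard : Fintype.card (Fin 3) = Module.finrank ℝ (EuclideanSpace ℝ (Fin 3)) := by
      simp
    let bb := basisOfOrthonormalOfCardEqFinrank ho hcard
    have hb : ⇑bb = v := coe_basisOfOrthonormalOfCardEqFinrank ho hcard
    refine ⟨bb.repr α 0, bb.repr α 1, bb.repr α 2, ?_⟩
    conv_lhs => rw [← bb.sum_repr α]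
    rw [Fin.sum_univ_three, hb]
    simp [hv]
  obtain ⟨x₁, x₂, x₃, hα⟩ := hrepr
  set a := Real.sqrt ((l₂ - l₁) / (l₃ - l₁)) with ha
  set b := Real.sqrt ((l₃ - l₂) / (l₃ - l₁)) with hb
  set μ := Real.sqrt (l₃ - l₂) * Real.sqrt (l₂ - l₁) with hμ
  -- scalar identities
  have hsr : Real.sqrt (l₃ - l₁) ≠ 0 := by positivity
  have ha' : a = Real.sqrt (l₂ - l₁) / Real.sqrt (l₃ - l₁) := by
    rw [ha, Real.sqrt_div hp.le]
  have hb' : b = Real.sqrt (l₃ - l₂) / Real.sqrt (l₃ - l₁) := by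
    rw [hb, Real.sqrt_div hq.le]
  have hpp : Real.sqrt (l₂ - l₁) * Real.sqrt (l₂ - l₁) = l₂ - l₁ :=
    Real.mul_self_sqrt hp.le
  have hqq : Real.sqrt (l₃ - l₂) * Real.sqrt (l₃ - l₂) = l₃ - l₂ :=
    Real.mul_self_sqrt hq.le
  have hμa : μ * a = b * (l₂ - l₁) := by
    rw [hμ, ha', hb']
    field_simp
    linear_combination hpp
  have hμb : μ * b = a * (l₃ - l₂) := by
    rw [hμ, ha', hb']
    field_simp
    linear_combination hqq
  -- compute the left-hand side
  have hL : S (cross3 ω α) - cross3 ω (S α) =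
      (b * x₂ * (l₂ - l₁)) • η₁ + (b * x₁ * (l₂ - l₁) + a * x₃ * (l₃ - l₂)) • η₂ +
        (a * x₂ * (l₃ - l₂)) • η₃ := by
    have hSα : S α = (x₁ * l₁) • η₁ + (x₂ * l₂) • η₂ + (x₃ * l₃) • η₃ := by
      rw [hα]
      simp only [map_add, map_smul, he₁, he₂, he₃, smul_smul]
    rw [hSα, hω, hα]
    simp only [cross3_add_left, cross3_add_right, cross3_smul_left, cross3_smul_right,
      cross3_self, c12, c23, c31, c21, c32, c13, smul_neg, smul_zero, smul_smul,
      map_add, map_smul, map_neg, he₁, he₂, he₃, map_zero]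
    module
  -- compute the right-hand side
  have hiω : ⟪ω, α⟫ = a * x₁ + b * x₃ := by
    rw [hω, hα]
    simp [inner_add_left, inner_add_right, inner_smul_left, inner_smul_right,
      h11, h22, h33, hn₁, hn₃, ho₁₂, ho₁₃, ho₂₃, ho₂₁, ho₃₁, ho₃₂]
    ring
  have hiη : ⟪η₂, α⟫ = x₂ := by
    rw [hα]
    simp [inner_add_right, inner_smul_right, h22, hn₂, ho₂₁, ho₂₃]
  rw [hL, hiω, hiη, hω]
  have e1 : b * x₂ * (l₂ - l₁) = μ * a * x₂ := by linear_combination (-x₂) * hμa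
  have e2 : a * x₂ * (l₃ - l₂) = μ * b * x₂ := by linear_combination (-x₂) * hμb
  have e3 : b * x₁ * (l₂ - l₁) + a * x₃ * (l₃ - l₂) = μ * (a * x₁ + b * x₃) := by
    linear_combination (-x₁) * hμa + (-x₃) * hμb
  rw [e1, e2, e3]
  module
end
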